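/- (Weyl's inequality for singular values) For matrices A, E ∈ ℝ^{m×n} and any index i, |σ_i(A + E) - σ_i(A)| ≤ ‖E‖₂, where σ_i denotes the i-th largest singular value and ‖·‖₂ the spectral norm. -/

import Mathlib

open Matrix

/-- The singular values of a real matrix, listed in decreasing order and
zero-padded: the `i`-th largest square root of an eigenvalue of `Aᴴ * A`. -/
noncomputable def singVals {m n : Type*} [Fintype m] [Fintype n] [DecidableEq n]
    (A : Matrix m n ℝ) : ℕ → ℝ := fun i =>
  (((Finset.univ : Finset n).toList.map fun j =>
    Real.sqrt ((show (Aᵀ * A).IsHermitian by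
      simpa only [conjTranspose_eq_transpose_of_trivial] using
        Matrix.isHermitian_conjTranspose_mul_self A).eigenvalues j)).insertionSort
      (· ≥ ·)).getD i 0

/-- The spectral norm of a real matrix: its largest singular value. -/
noncomputable def specNorm {m n : Type*} [Fintype m] [Fintype n] [DecidableEq n]
    (A : Matrix m n ℝ) : ℝ := singVals A 0

theorem Matrix.isHermitian_transpose_mul_self {m n : Type*} [Fintype m]
    (A : Matrix m n ℝ) : (Aᵀ * A).IsHermitian := by
  simpa only [conjTranspose_eq_transpose_of_trivial] using
    Matrix.isHermitian_conjTranspose_mul_self A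

namespace WeylAux

lemma countP_toList {α : Type*} (s : Finset α) (Pred : α → Prop) [DecidablePred Pred] :
    s.toList.countP (fun a => decide (Pred a)) = (s.filter Pred).card := by
  have h1 : (s.filter Pred).card = Multiset.countP Pred s.val := by
    rw [Finset.card_def, Finset.filter_val, ← Multiset.countP_eq_card_filter]
  rw [h1, ← Finset.coe_toList s, Multiset.coe_countP]

variable {m n : ℕ}

noncomputable def svList (A : Matrix (Fin m) (Fin n) ℝ) : List ℝ :=
  (((Finset.univ : Finset (Fin n)).toList.map fun j =>
    Real.sqrt ((Matrix.isHermitian_transpose_mul_self A).eigenvalues j)).insertionSort (· ≥ ·))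

lemma singVals_def (A : Matrix (Fin m) (Fin n) ℝ) (i : ℕ) :
    singVals A i = (svList A).getD i 0 := rfl

lemma svList_length (A : Matrix (Fin m) (Fin n) ℝ) : (svList A).length = n := by
  simp [svList]

lemma svList_sorted (A : Matrix (Fin m) (Fin n) ℝ) : (svList A).Pairwise (· ≥ ·) :=
  List.pairwise_insertionSort _ _

lemma svList_anti (A : Matrix (Fin m) (Fin n) ℝ) {a b : Fin (svList A).length} (hab : a ≤ b) :
    (svList A).get b ≤ (svList A).get a :=
  (svList_sorted A).rel_get_of_le hab

lemma svList_perm (A : Matrix (Fin m) (Fin n) ℝ) :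
    (svList A).Perm ((Finset.univ : Finset (Fin n)).toList.map fun j =>
      Real.sqrt ((Matrix.isHermitian_transpose_mul_self A).eigenvalues j)) :=
  List.perm_insertionSort _ _

lemma mem_svList (A : Matrix (Fin m) (Fin n) ℝ) {a : ℝ} (ha : a ∈ svList A) :
    ∃ j, a = Real.sqrt ((Matrix.isHermitian_transpose_mul_self A).eigenvalues j) := by
  have := (svList_perm A).mem_iff.1 ha
  simp only [List.mem_map] at this
  obtain ⟨j, _, hj⟩ := this
  exact ⟨j, hj.symm⟩

lemma singVals_nonneg (A : Matrix (Fin m) (Fin n) ℝ) (i : ℕ) : 0 ≤ singVals A i := by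
  rw [singVals_def]
  rcases lt_or_ge i (svList A).length with h | h
  · rw [List.getD_eq_getElem _ _ h]
    obtain ⟨j, hj⟩ := mem_svList A (List.getElem_mem h)
    rw [hj]; exact Real.sqrt_nonneg _
  · rw [List.getD_eq_default _ _ h]

lemma singVals_of_ge (A : Matrix (Fin m) (Fin n) ℝ) {i : ℕ} (h : n ≤ i) :
    singVals A i = 0 := by
  rw [singVals_def, List.getD_eq_default]
  rw [svList_length]; exact h

lemma singVals_eq_get (A : Matrix (Fin m) (Fin n) ℝ) {i : ℕ} (h : i < n) :
    singVals A i = (svList A).get ⟨i, (svList_length A).symm ▸ h⟩ := by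
  rw [singVals_def, List.getD_eq_getElem]
  rfl

lemma le_specNorm_of_mem (A : Matrix (Fin m) (Fin n) ℝ) {a : ℝ} (ha : a ∈ svList A) :
    a ≤ specNorm A := by
  obtain ⟨k, hk⟩ := List.mem_iff_get.1 ha
  have h0 : 0 < n := by
    have h1 := k.isLt
    have h2 := svList_length A
    omega
  rw [← hk, specNorm, singVals_eq_get A h0]
  exact svList_anti A (Fin.mk_le_mk.2 (Nat.zero_le _))

lemma specNorm_nonneg (A : Matrix (Fin m) (Fin n) ℝ) : 0 ≤ specNorm A :=
  singVals_nonneg A 0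

lemma count_ge (A : Matrix (Fin m) (Fin n) ℝ) {i : ℕ} (h : i < n) :
    i + 1 ≤ (Finset.univ.filter fun j =>
      singVals A i ≤ Real.sqrt ((Matrix.isHermitian_transpose_mul_self A).eigenvalues j)).card := by
  set c := singVals A i with hc
  set p : ℝ → Bool := fun x => decide (c ≤ x) with hp
  have hi : i < (svList A).length := (svList_length A).symm ▸ h
  have htake : ∀ a ∈ (svList A).take (i + 1), p a = true := by
    intro a ha
    rw [List.mem_take_iff_getElem] at ha
    obtain ⟨k, hk, rfl⟩ := ha
    have hk' : k < (svList A).length := lt_of_lt_of_le hk (min_le_right _ _)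
    simp only [hp, decide_eq_true_eq, hc]
    rw [singVals_eq_get A h]
    exact svList_anti A (Fin.mk_le_mk.2 (Nat.lt_succ_iff.1 (lt_of_lt_of_le hk (min_le_left _ _))))
  have h1 : ((svList A).take (i + 1)).countP p = i + 1 := by
    rw [List.countP_eq_length.2 htake, List.length_take, svList_length]
    omega
  have h2 : i + 1 ≤ (svList A).countP p := by
    conv_rhs => rw [← List.take_append_drop (i + 1) (svList A)]
    rw [List.countP_append, h1]
    omega
  have h3 : (svList A).countP p = ((Finset.univ : Finset (Fin n)).toList.map fun j =>
      Real.sqrt ((Matrix.isHermitian_transpose_mul_self A).eigenvalues j)).countP p :=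
    (svList_perm A).countP_eq p
  rw [h3, List.countP_map] at h2
  rw [← countP_toList]
  exact h2

lemma count_le (A : Matrix (Fin m) (Fin n) ℝ) {i : ℕ} (h : i < n) :
    n - i ≤ (Finset.univ.filter fun j =>
      Real.sqrt ((Matrix.isHermitian_transpose_mul_self A).eigenvalues j) ≤ singVals A i).card := by
  set c := singVals A i with hc
  set p : ℝ → Bool := fun x => decide (x ≤ c) with hp
  have hi : i < (svList A).length := (svList_length A).symm ▸ h
  have hdrop : ∀ a ∈ (svList A).drop i, p a = true := by
    intro a ha
    rw [List.mem_drop_iff_getElem] at ha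
    obtain ⟨k, hk, rfl⟩ := ha
    simp only [hp, decide_eq_true_eq, hc]
    rw [singVals_eq_get A h]
    have hk' : i + k < (svList A).length := by omega
    have : (svList A)[i+k] = (svList A).get ⟨i + k, hk'⟩ := rfl
    rw [this]
    exact svList_anti A (Fin.mk_le_mk.2 (Nat.le_add_right _ _))
  have h1 : ((svList A).drop i).countP p = n - i := by
    rw [List.countP_eq_length.2 hdrop, List.length_drop, svList_length]
  have h2 : n - i ≤ (svList A).countP p := by
    conv_rhs => rw [← List.take_append_drop i (svList A)]
    rw [List.countP_append, h1]
    omega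
  have h3 : (svList A).countP p = ((Finset.univ : Finset (Fin n)).toList.map fun j =>
      Real.sqrt ((Matrix.isHermitian_transpose_mul_self A).eigenvalues j)).countP p :=
    (svList_perm A).countP_eq p
  rw [h3, List.countP_map] at h2
  rw [← countP_toList]
  exact h2


lemma norm_sq_expand (A : Matrix (Fin m) (Fin n) ℝ) (x : EuclideanSpace ℝ (Fin n)) :
    ‖Matrix.toEuclideanLin A x‖ ^ 2 =
      ∑ j, (Matrix.isHermitian_transpose_mul_self A).eigenvalues j *
        ((Matrix.isHermitian_transpose_mul_self A).eigenvectorBasis.repr x j) ^ 2 := by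
  set b := (Matrix.isHermitian_transpose_mul_self A).eigenvectorBasis with hb
  have hsum : x = ∑ j, b.repr x j • b j := (b.sum_repr x).symm
  have hS : Matrix.toEuclideanLin (Aᴴ * A) x =
      ∑ j, (b.repr x j * (Matrix.isHermitian_transpose_mul_self A).eigenvalues j) • b j := by
    conv_lhs => rw [hsum]
    rw [map_sum]
    refine Finset.sum_congr rfl fun j _ => ?_
    rw [_root_.map_smul]
    have := (Matrix.isHermitian_transpose_mul_self A).mulVec_eigenvectorBasis j
    have h2 : Matrix.toEuclideanLin (Aᴴ * A) (b j) =
        (Matrix.isHermitian_transpose_mul_self A).eigenvalues j • b j := by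
      apply (WithLp.equiv 2 _).injective
      simpa [Matrix.toEuclideanLin_apply] using this
    rw [h2, smul_smul, mul_comm]
  have key : ‖Matrix.toEuclideanLin A x‖ ^ 2 =
      inner ℝ x (Matrix.toEuclideanLin (Aᴴ * A) x) := by
    have hadj : Matrix.toEuclideanLin (Aᴴ * A) x =
        LinearMap.adjoint (Matrix.toEuclideanLin A) (Matrix.toEuclideanLin A x) := by
      rw [← Matrix.toEuclideanLin_conjTranspose_eq_adjoint]
      apply (WithLp.equiv 2 _).injective
      simp [Matrix.toEuclideanLin_apply, Matrix.mulVec_mulVec]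
    rw [hadj, LinearMap.adjoint_inner_right, real_inner_self_eq_norm_sq]
  rw [key, hS, inner_sum]
  refine Finset.sum_congr rfl fun j _ => ?_
  rw [real_inner_smul_right]
  have : (inner ℝ x (b j) : ℝ) = b.repr x j := by
    rw [real_inner_comm, b.repr_apply_apply]
  rw [this]; ring

lemma norm_sq_eq_sum (A : Matrix (Fin m) (Fin n) ℝ) (x : EuclideanSpace ℝ (Fin n)) :
    ‖x‖ ^ 2 = ∑ j, ((Matrix.isHermitian_transpose_mul_self A).eigenvectorBasis.repr x j) ^ 2 := by
  set b := (Matrix.isHermitian_transpose_mul_self A).eigenvectorBasis with hb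
  rw [← b.repr.norm_map x, ← real_inner_self_eq_norm_sq]
  rw [PiLp.inner_apply]
  refine Finset.sum_congr rfl fun j _ => ?_
  simp [RCLike.inner_apply, conj_trivial, sq]

lemma repr_eq_zero (A : Matrix (Fin m) (Fin n) ℝ) (S : Finset (Fin n))
    {x : EuclideanSpace ℝ (Fin n)}
    (hx : x ∈ Submodule.span ℝ
      ((Matrix.isHermitian_transpose_mul_self A).eigenvectorBasis '' ↑S))
    {j : Fin n} (hj : j ∉ S) :
    (Matrix.isHermitian_transpose_mul_self A).eigenvectorBasis.repr x j = 0 := by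
  set b := (Matrix.isHermitian_transpose_mul_self A).eigenvectorBasis with hb
  have hx' : x ∈ Submodule.span ℝ (⇑b.toBasis '' ↑S) := by
    rwa [b.coe_toBasis]
  rw [Module.Basis.mem_span_image] at hx'
  rw [← b.coe_toBasis_repr_apply]
  by_contra hne
  exact hj (hx' (Finsupp.mem_support_iff.2 hne))

lemma norm_mulVec_le (A : Matrix (Fin m) (Fin n) ℝ) (S : Finset (Fin n)) {c : ℝ} (hc : 0 ≤ c)
    (hS : ∀ j ∈ S, Real.sqrt ((Matrix.isHermitian_transpose_mul_self A).eigenvalues j) ≤ c)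
    {x : EuclideanSpace ℝ (Fin n)}
    (hx : x ∈ Submodule.span ℝ
      ((Matrix.isHermitian_transpose_mul_self A).eigenvectorBasis '' ↑S)) :
    ‖Matrix.toEuclideanLin A x‖ ≤ c * ‖x‖ := by
  set b := (Matrix.isHermitian_transpose_mul_self A).eigenvectorBasis with hb
  have hsq : ‖Matrix.toEuclideanLin A x‖ ^ 2 ≤ (c * ‖x‖) ^ 2 := by
    rw [norm_sq_expand, mul_pow, norm_sq_eq_sum A, Finset.mul_sum]
    refine Finset.sum_le_sum fun j _ => ?_
    by_cases hj : j ∈ S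
    · refine mul_le_mul_of_nonneg_right ?_ (sq_nonneg _)
      have h0 := (Matrix.posSemidef_conjTranspose_mul_self A).eigenvalues_nonneg j
      calc (Matrix.isHermitian_transpose_mul_self A).eigenvalues j
          = (Real.sqrt ((Matrix.isHermitian_transpose_mul_self A).eigenvalues j)) ^ 2 :=
            (Real.sq_sqrt h0).symm
        _ ≤ c ^ 2 := pow_le_pow_left₀ (Real.sqrt_nonneg _) (hS j hj) 2
    · rw [repr_eq_zero A S hx hj]
      simp
  have := Real.sqrt_le_sqrt hsq
  rwa [Real.sqrt_sq (norm_nonneg _), Real.sqrt_sq (by positivity)] at this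

lemma le_norm_mulVec (A : Matrix (Fin m) (Fin n) ℝ) (S : Finset (Fin n)) {c : ℝ} (hc : 0 ≤ c)
    (hS : ∀ j ∈ S, c ≤ Real.sqrt ((Matrix.isHermitian_transpose_mul_self A).eigenvalues j))
    {x : EuclideanSpace ℝ (Fin n)}
    (hx : x ∈ Submodule.span ℝ
      ((Matrix.isHermitian_transpose_mul_self A).eigenvectorBasis '' ↑S)) :
    c * ‖x‖ ≤ ‖Matrix.toEuclideanLin A x‖ := by
  set b := (Matrix.isHermitian_transpose_mul_self A).eigenvectorBasis with hb
  have hsq : (c * ‖x‖) ^ 2 ≤ ‖Matrix.toEuclideanLin A x‖ ^ 2 := by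
    rw [norm_sq_expand, mul_pow, norm_sq_eq_sum A, Finset.mul_sum]
    refine Finset.sum_le_sum fun j _ => ?_
    by_cases hj : j ∈ S
    · refine mul_le_mul_of_nonneg_right ?_ (sq_nonneg _)
      have h0 := (Matrix.posSemidef_conjTranspose_mul_self A).eigenvalues_nonneg j
      calc c ^ 2 ≤ (Real.sqrt ((Matrix.isHermitian_transpose_mul_self A).eigenvalues j)) ^ 2 :=
            pow_le_pow_left₀ hc (hS j hj) 2
        _ = (Matrix.isHermitian_transpose_mul_self A).eigenvalues j := Real.sq_sqrt h0
    · rw [repr_eq_zero A S hx hj]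
      simp
  have := Real.sqrt_le_sqrt hsq
  rwa [Real.sqrt_sq (by positivity), Real.sqrt_sq (norm_nonneg _)] at this

lemma card_le_finrank_span (A : Matrix (Fin m) (Fin n) ℝ) (S : Finset (Fin n)) :
    S.card ≤ Module.finrank ℝ (Submodule.span ℝ
      ((Matrix.isHermitian_transpose_mul_self A).eigenvectorBasis '' ↑S)) := by
  set b := (Matrix.isHermitian_transpose_mul_self A).eigenvectorBasis with hb
  set V := Submodule.span ℝ (⇑b '' ↑S) with hV
  have hli : LinearIndependent ℝ (fun j : {x // x ∈ S} => b j) :=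
    b.orthonormal.linearIndependent.comp _ Subtype.val_injective
  have hmem : ∀ j : {x // x ∈ S}, (b j : EuclideanSpace ℝ (Fin n)) ∈ V :=
    fun j => Submodule.subset_span ⟨j, j.2, rfl⟩
  have hli2 : LinearIndependent ℝ (fun j : {x // x ∈ S} => (⟨b j, hmem j⟩ : V)) := by
    apply LinearIndependent.of_comp V.subtype
    convert hli
    rfl
  have := hli2.fintype_card_le_finrank
  simpa using this

lemma exists_unit_mem_inf (V W : Submodule ℝ (EuclideanSpace ℝ (Fin n)))
    (h : n < Module.finrank ℝ V + Module.finrank ℝ W) :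
    ∃ x : EuclideanSpace ℝ (Fin n), x ∈ V ∧ x ∈ W ∧ ‖x‖ = 1 := by
  have hdim := Submodule.finrank_sup_add_finrank_inf_eq V W
  have hle : Module.finrank ℝ ↥(V ⊔ W) ≤ n := by
    have := Submodule.finrank_le (V ⊔ W)
    rwa [finrank_euclideanSpace, Fintype.card_fin] at this
  have hpos : Module.finrank ℝ ↥(V ⊓ W) ≠ 0 := by omega
  have hbot : V ⊓ W ≠ ⊥ := by
    intro hb
    apply hpos
    rw [hb]
    simp
  obtain ⟨x, hxmem, hx0⟩ := Submodule.exists_mem_ne_zero_of_ne_bot hbot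
  refine ⟨(‖x‖⁻¹ : ℝ) • x, ?_, ?_, ?_⟩
  · exact Submodule.smul_mem _ _ hxmem.1
  · exact Submodule.smul_mem _ _ hxmem.2
  · exact norm_smul_inv_norm hx0


lemma span_top (A : Matrix (Fin m) (Fin n) ℝ) (x : EuclideanSpace ℝ (Fin n)) :
    x ∈ Submodule.span ℝ
      ((Matrix.isHermitian_transpose_mul_self A).eigenvectorBasis ''
        ↑(Finset.univ : Finset (Fin n))) := by
  set b := (Matrix.isHermitian_transpose_mul_self A).eigenvectorBasis with hb
  have : Submodule.span ℝ (⇑b '' ↑(Finset.univ : Finset (Fin n))) = ⊤ := by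
    rw [Finset.coe_univ, Set.image_univ, ← b.coe_toBasis, b.toBasis.span_eq]
  rw [this]
  trivial

lemma spec_bound (E : Matrix (Fin m) (Fin n) ℝ) (x : EuclideanSpace ℝ (Fin n)) :
    ‖Matrix.toEuclideanLin E x‖ ≤ specNorm E * ‖x‖ := by
  refine norm_mulVec_le E Finset.univ (specNorm_nonneg E) (fun j _ => ?_) (span_top E x)
  refine le_specNorm_of_mem E ((svList_perm E).mem_iff.2 ?_)
  exact List.mem_map.2 ⟨j, Finset.mem_toList.2 (Finset.mem_univ j), rfl⟩

lemma key (A E : Matrix (Fin m) (Fin n) ℝ) (i : ℕ) :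
    singVals (A + E) i ≤ singVals A i + specNorm E := by
  rcases lt_or_ge i n with h | h
  · set B := A + E with hB
    set SB := (Finset.univ.filter fun j =>
      singVals B i ≤ Real.sqrt ((Matrix.isHermitian_transpose_mul_self B).eigenvalues j))
      with hSB
    set SA := (Finset.univ.filter fun j =>
      Real.sqrt ((Matrix.isHermitian_transpose_mul_self A).eigenvalues j) ≤ singVals A i)
      with hSA
    set V := Submodule.span ℝ
      ((Matrix.isHermitian_transpose_mul_self B).eigenvectorBasis '' ↑SB) with hV
    set W := Submodule.span ℝ
      ((Matrix.isHermitian_transpose_mul_self A).eigenvectorBasis '' ↑SA) with hW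
    have hVrk : i + 1 ≤ Module.finrank ℝ V :=
      le_trans (count_ge B h) (card_le_finrank_span B SB)
    have hWrk : n - i ≤ Module.finrank ℝ W :=
      le_trans (count_le A h) (card_le_finrank_span A SA)
    have hsum : n < Module.finrank ℝ V + Module.finrank ℝ W := by omega
    obtain ⟨x, hxV, hxW, hx1⟩ := exists_unit_mem_inf V W hsum
    have h1 : singVals B i * ‖x‖ ≤ ‖Matrix.toEuclideanLin B x‖ :=
      le_norm_mulVec B SB (singVals_nonneg B i)
        (fun j hj => (Finset.mem_filter.1 hj).2) hxV
    have h2 : ‖Matrix.toEuclideanLin A x‖ ≤ singVals A i * ‖x‖ :=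
      norm_mulVec_le A SA (singVals_nonneg A i)
        (fun j hj => (Finset.mem_filter.1 hj).2) hxW
    have h3 : ‖Matrix.toEuclideanLin E x‖ ≤ specNorm E * ‖x‖ := spec_bound E x
    have h4 : Matrix.toEuclideanLin B x =
        Matrix.toEuclideanLin A x + Matrix.toEuclideanLin E x := by
      rw [hB, map_add]
      rfl
    have h5 : ‖Matrix.toEuclideanLin B x‖ ≤
        ‖Matrix.toEuclideanLin A x‖ + ‖Matrix.toEuclideanLin E x‖ := by
      rw [h4]; exact norm_add_le _ _
    rw [hx1, mul_one] at h1 h2 h3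
    linarith
  · rw [singVals_of_ge _ h, singVals_of_ge _ h]
    simpa using specNorm_nonneg E

lemma eigenvalues_congr {N₁ N₂ : Matrix (Fin n) (Fin n) ℝ} (h : N₁ = N₂)
    (h1 : N₁.IsHermitian) (h2 : N₂.IsHermitian) : h1.eigenvalues = h2.eigenvalues := by
  subst h; rfl

lemma singVals_neg (E : Matrix (Fin m) (Fin n) ℝ) : singVals (-E) = singVals E := by
  have h : (-E)ᵀ * (-E) = Eᵀ * E := by simp
  have h2 := eigenvalues_congr h (Matrix.isHermitian_transpose_mul_self (-E))
    (Matrix.isHermitian_transpose_mul_self E)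
  funext i
  simp only [singVals, h2]

lemma specNorm_neg (E : Matrix (Fin m) (Fin n) ℝ) : specNorm (-E) = specNorm E := by
  rw [specNorm, specNorm, singVals_neg]

end WeylAux

/-- Weyl's inequality for singular values. -/
theorem weyl_singular_values {m n : ℕ} (A E : Matrix (Fin m) (Fin n) ℝ) (i : ℕ) :
    |singVals (A + E) i - singVals A i| ≤ specNorm E := by
  rw [abs_sub_le_iff]
  constructor
  · linarith [WeylAux.key A E i]
  · have := WeylAux.key (A + E) (-E) i
    rw [add_neg_cancel_right, WeylAux.specNorm_neg] at this
    linarith
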